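/- Let ν > -1/2. There exist constants C, c > 0 (depending only on ν) such that p_t^ν(x,y) ≤ C t^{-1/2} exp(-|x-y|²/(ct)) (1 + √t/x)^{-ν-1/2} (1 + √t/y)^{-ν-1/2} for all t > 0 and all x, y ∈ (0,∞). -/

import Mathlib

open MeasureTheory Real Set

/-- Modified Bessel function of the first kind `I_a(z)` (for `z > 0`, `a > -1`). -/
noncomputable def besselI (a z : ℝ) : ℝ :=
  ∑' m : ℕ, (z / 2) ^ (a + 2 * (m : ℝ)) / ((Nat.factorial m : ℝ) * Real.Gamma (a + (m : ℝ) + 1))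

/-- One-dimensional Bessel heat kernel `p_t^ν(x,y)`. -/
noncomputable def heatK (ν t x y : ℝ) : ℝ :=
  Real.sqrt (x * y) / (2 * t) * Real.exp (-(x ^ 2 + y ^ 2) / (4 * t)) *
    besselI ν (x * y / (2 * t))

/-- Bessel derivative `δ_ν f(x) = f'(x) - (ν+1/2) f(x)/x`. -/
noncomputable def bD (ν : ℝ) (f : ℝ → ℝ) : ℝ → ℝ :=
  fun x => deriv f x - (ν + 1 / 2) * f x / x

/-- `ℓ`-fold iterate `δ_ν^ℓ`. -/
noncomputable def bDIter (ν : ℝ) : ℕ → (ℝ → ℝ) → ℝ → ℝ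
  | 0, f => f
  | n + 1, f => bD ν (bDIter ν n f)

lemma aux_pow_div_le_exp {x : ℝ} (hx : 0 ≤ x) (n : ℕ) :
    x ^ n / n.factorial ≤ Real.exp x := by
  refine le_trans ?_ (Real.sum_le_exp_of_nonneg hx (n+1))
  have h := Finset.single_le_sum (f := fun i => x ^ i / (i.factorial : ℝ))
    (fun i _ => by positivity) (Finset.self_mem_range_succ n)
  simpa using h

lemma exp_tsum (z : ℝ) : ∑' n : ℕ, z ^ n / (n.factorial : ℝ) = Real.exp z := by
  rw [Real.exp_eq_exp_ℝ, NormedSpace.exp_eq_tsum_div]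

lemma poly_le_exp (p θ : ℝ) (hθ : 0 < θ) :
    ∃ A > 0, ∀ w : ℝ, 0 ≤ w → (1 + w) ^ p ≤ A * Real.exp (θ * w) := by
  set m := ⌈p⌉₊ with hm
  refine ⟨(m.factorial / θ ^ m) * Real.exp θ, by positivity, fun w hw => ?_⟩
  have h1 : (1 + w : ℝ) ^ p ≤ (1 + w) ^ (m : ℝ) :=
    Real.rpow_le_rpow_of_exponent_le (by linarith) (Nat.le_ceil p)
  have h2 : (1 + w : ℝ) ^ (m : ℝ) = (1 + w) ^ m := Real.rpow_natCast _ m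
  have h3 : (θ * (1 + w)) ^ m / m.factorial ≤ Real.exp (θ * (1 + w)) :=
    aux_pow_div_le_exp (by positivity) m
  rw [mul_pow, div_le_iff₀ (by positivity)] at h3
  have h4 : (1 + w : ℝ) ^ m ≤ (m.factorial / θ ^ m) * Real.exp (θ * (1 + w)) := by
    rw [div_mul_eq_mul_div, le_div_iff₀ (by positivity)]
    nlinarith [h3]
  have h5 : Real.exp (θ * (1 + w)) = Real.exp θ * Real.exp (θ * w) := by
    rw [← Real.exp_add]; ring_nf
  calc (1 + w : ℝ) ^ p ≤ (1 + w) ^ m := h2 ▸ h1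
    _ ≤ (m.factorial / θ ^ m) * Real.exp (θ * (1 + w)) := h4
    _ = (m.factorial / θ ^ m) * Real.exp θ * Real.exp (θ * w) := by rw [h5]; ring

lemma T_bound {s : ℝ} (hs : 0 < s) :
    ∃ B > 0, ∀ z : ℝ, 0 < z →
      (∑' k : ℕ, z ^ (2*k) / ((2*k).factorial * ((k:ℝ)+1) ^ s)) * (1+z) ^ s
        ≤ B * Real.exp z := by
  obtain ⟨A, hA, hAle⟩ := poly_le_exp (s+1) (3/20) (by norm_num)
  refine ⟨5 ^ s + (4 ^ s + (2*Real.exp 1)^2 * A), by positivity, fun z hz => ?_⟩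
  set g : ℕ → ℝ := fun k => z ^ (2*k) / ((2*k).factorial * ((k:ℝ)+1) ^ s) with hgdef
  have hg0 : ∀ k, 0 ≤ g k := fun k => by positivity
  have hfle : ∀ k : ℕ, g k ≤ z ^ (2*k) / ((2*k).factorial : ℝ) := by
    intro k
    apply div_le_div_of_nonneg_left (by positivity) (by positivity)
    have h1 : (1:ℝ) ≤ ((k:ℝ)+1) ^ s := Real.one_le_rpow (by linarith [Nat.cast_nonneg (α := ℝ) k]) hs.le
    nlinarith [(Nat.cast_pos (α := ℝ)).2 (Nat.factorial_pos (2*k)), h1]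
  have hcosh : Summable (fun k : ℕ => z ^ (2*k) / ((2*k).factorial : ℝ)) :=
    (Real.hasSum_cosh z).summable
  have hg : Summable g := Summable.of_nonneg_of_le hg0 hfle hcosh
  have hinj : Function.Injective (fun k : ℕ => 2*k) := fun a b h => by simpa using h
  have hexpsum : Summable (fun n : ℕ => z ^ n / (n.factorial : ℝ)) :=
    Real.summable_pow_div_factorial z
  have hcosh_le : (∑' k : ℕ, z ^ (2*k) / ((2*k).factorial : ℝ)) ≤ Real.exp z := by
    rw [← exp_tsum z]
    exact Summable.tsum_le_tsum_of_inj (fun k => 2*k) hinj (fun c _ => by positivity)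
      (fun k => le_rfl) hcosh hexpsum
  rcases le_or_gt z 4 with hz4 | hz4
  · have hT : (∑' k, g k) ≤ Real.exp z :=
      le_trans (Summable.tsum_le_tsum hfle hg hcosh) hcosh_le
    have hP : (1+z) ^ s ≤ 5 ^ s := Real.rpow_le_rpow (by linarith) (by linarith) hs.le
    have h0T : 0 ≤ ∑' k, g k := tsum_nonneg hg0
    calc (∑' k, g k) * (1+z) ^ s ≤ Real.exp z * 5 ^ s :=
          mul_le_mul hT hP (by positivity) (Real.exp_pos z).le
      _ ≤ (5 ^ s + (4 ^ s + (2*Real.exp 1)^2 * A)) * Real.exp z := by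
          have e1 : (0:ℝ) < 4 ^ s := Real.rpow_pos_of_pos (by norm_num) s
          have e2 : (0:ℝ) < (2*Real.exp 1)^2 * A := by positivity
          nlinarith [Real.exp_pos z]
  · -- z > 4
    set K := ⌈z/4⌉₊ with hKdef
    have hK0 : z/4 ≤ (K:ℝ) := Nat.le_ceil _
    have hKu : (K:ℝ) < z/4 + 1 := Nat.ceil_lt_add_one (by positivity)
    have h2K : 2*(K:ℝ) ≤ z := by linarith
    have hsplit : (∑' k, g k) = (∑ k ∈ Finset.range K, g k) + ∑' k, g (k + K) :=
      (Summable.sum_add_tsum_nat_add K hg).symm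
    -- tail bound
    have htail : (∑' k : ℕ, g (k + K)) ≤ ((K:ℝ)+1) ^ (-s) * Real.exp z := by
      have hsum2 : Summable (fun n : ℕ => ((K:ℝ)+1) ^ (-s) * (z ^ n / (n.factorial : ℝ))) :=
        hexpsum.mul_left _
      have hterm : ∀ k : ℕ, g (k + K) ≤
          ((K:ℝ)+1) ^ (-s) * (z ^ (2*(k+K)) / ((2*(k+K)).factorial : ℝ)) := by
        intro k
        have h1 : ((K:ℝ)+1) ^ s ≤ (((k+K:ℕ):ℝ)+1) ^ s := by
          apply Real.rpow_le_rpow (by positivity) ?_ hs.le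
          push_cast; linarith [Nat.cast_nonneg (α := ℝ) k]
        have h2 : (0:ℝ) < ((K:ℝ)+1) ^ s := Real.rpow_pos_of_pos (by positivity) s
        have e : g (k+K) = (z ^ (2*(k+K)) / ((2*(k+K)).factorial : ℝ)) * ((((k+K:ℕ):ℝ)+1) ^ s)⁻¹ := by
          rw [hgdef]; simp only []; field_simp
        calc g (k+K) = (z ^ (2*(k+K)) / ((2*(k+K)).factorial : ℝ)) * ((((k+K:ℕ):ℝ)+1) ^ s)⁻¹ := e
          _ ≤ (z ^ (2*(k+K)) / ((2*(k+K)).factorial : ℝ)) * (((K:ℝ)+1) ^ s)⁻¹ :=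
              mul_le_mul_of_nonneg_left (inv_anti₀ h2 h1) (by positivity)
          _ = ((K:ℝ)+1) ^ (-s) * (z ^ (2*(k+K)) / ((2*(k+K)).factorial : ℝ)) := by
              rw [Real.rpow_neg (by positivity)]; ring
      have hsubsum : Summable (fun k : ℕ => g (k + K)) := (summable_nat_add_iff K).2 hg
      calc (∑' k : ℕ, g (k + K))
          ≤ ∑' n : ℕ, ((K:ℝ)+1) ^ (-s) * (z ^ n / (n.factorial : ℝ)) := by
            refine Summable.tsum_le_tsum_of_inj (fun k => 2*(k+K)) (fun a b h => by simpa using h)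
              (fun c _ => by positivity) (fun k => hterm k) hsubsum hsum2
        _ = ((K:ℝ)+1) ^ (-s) * Real.exp z := by rw [tsum_mul_left, exp_tsum]
    -- head bound
    have hstep : ∀ j : ℕ, 2*((j:ℝ)+1) ≤ z →
        z ^ (2*j) / ((2*j).factorial : ℝ) ≤ z ^ (2*(j+1)) / ((2*(j+1)).factorial : ℝ) := by
      intro j hj
      have hf1 : ((2*(j+1)).factorial : ℝ) = (2*(j:ℝ)+2) * ((2*(j:ℝ)+1) * ((2*j).factorial : ℝ)) := by
        rw [show 2*(j+1) = (2*j+1)+1 by ring, Nat.factorial_succ, Nat.factorial_succ]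
        push_cast; ring
      rw [div_le_div_iff₀ (by positivity) (by positivity), hf1]
      have hz2 : (2*(j:ℝ)+2) ≤ z := by linarith
      have h2j1 : (2*(j:ℝ)+1) ≤ z := by linarith
      have hprod : (2*(j:ℝ)+2) * (2*(j:ℝ)+1) ≤ z * z :=
        mul_le_mul hz2 h2j1 (by positivity) hz.le
      have hzp : (0:ℝ) < z ^ (2*j) := by positivity
      have hfp : (0:ℝ) < ((2*j).factorial : ℝ) := by positivity
      have : z ^ (2*(j+1)) = z ^ (2*j) * (z * z) := by ring
      rw [this]
      nlinarith [mul_pos hzp hfp]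
    have hmono' : ∀ m k : ℕ, k + m ≤ K →
        z ^ (2*k) / ((2*k).factorial : ℝ) ≤ z ^ (2*(k+m)) / ((2*(k+m)).factorial : ℝ) := by
      intro m
      induction m with
      | zero => intro k _; simp
      | succ m ih =>
        intro k hk
        have h1 := ih k (by omega)
        have hcast : ((k+m:ℕ):ℝ) + 1 ≤ (K:ℝ) := by exact_mod_cast Nat.succ_le_of_lt (by omega)
        have h2 : 2*(((k+m:ℕ):ℝ)+1) ≤ z := by linarith
        have h3 := hstep (k+m) h2
        have heq : k + (m+1) = (k+m) + 1 := by omega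
        rw [heq]
        exact h1.trans h3
    have hmono : ∀ k : ℕ, k ≤ K →
        z ^ (2*k) / ((2*k).factorial : ℝ) ≤ z ^ (2*K) / ((2*K).factorial : ℝ) := by
      intro k hk
      have := hmono' (K - k) k (by omega)
      rwa [Nat.add_sub_cancel' hk] at this
    have hhead : (∑ k ∈ Finset.range K, g k) ≤ (K:ℝ) * (z ^ (2*K) / ((2*K).factorial : ℝ)) := by
      calc (∑ k ∈ Finset.range K, g k)
          ≤ ∑ _k ∈ Finset.range K, z ^ (2*K) / ((2*K).factorial : ℝ) :=
            Finset.sum_le_sum (fun k hk =>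
              (hfle k).trans (hmono k (le_of_lt (Finset.mem_range.1 hk))))
        _ = (K:ℝ) * (z ^ (2*K) / ((2*K).factorial : ℝ)) := by
            rw [Finset.sum_const, Finset.card_range, nsmul_eq_mul]
    have hfK : z ^ (2*K) / ((2*K).factorial : ℝ) ≤ (2*Real.exp 1) ^ (2*K) := by
      have hx : (0:ℝ) ≤ ((2*K:ℕ):ℝ) := by positivity
      have h1 : ((2*K:ℕ):ℝ) ^ (2*K) / ((2*K).factorial : ℝ) ≤ Real.exp ((2*K:ℕ):ℝ) :=
        aux_pow_div_le_exp hx (2*K)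
      have hexpK : Real.exp ((2*K:ℕ):ℝ) = (Real.exp 1) ^ (2*K) := (Real.exp_one_pow (2*K)).symm
      have hz4K : z ≤ 2*((2*K:ℕ):ℝ) := by push_cast; linarith
      have h2 : z ^ (2*K) ≤ (2*((2*K:ℕ):ℝ)) ^ (2*K) := pow_le_pow_left₀ hz.le hz4K _
      have h3 : (2*((2*K:ℕ):ℝ)) ^ (2*K) = 2 ^ (2*K) * ((2*K:ℕ):ℝ) ^ (2*K) := mul_pow 2 _ _
      have hfp : (0:ℝ) < ((2*K).factorial : ℝ) := by positivity
      calc z ^ (2*K) / ((2*K).factorial : ℝ)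
          ≤ 2 ^ (2*K) * ((2*K:ℕ):ℝ) ^ (2*K) / ((2*K).factorial : ℝ) := by
            rw [← h3]; gcongr
        _ ≤ 2 ^ (2*K) * Real.exp ((2*K:ℕ):ℝ) := by
            rw [mul_div_assoc]
            exact mul_le_mul_of_nonneg_left h1 (by positivity)
        _ = (2*Real.exp 1) ^ (2*K) := by rw [hexpK, ← mul_pow]
    -- turn (2e)^(2K) into exponential bound
    have he1 : (1:ℝ) ≤ 2 * Real.exp 1 := by nlinarith [Real.add_one_le_exp (1:ℝ)]
    have hpow : ((2*Real.exp 1):ℝ) ^ (2*K) ≤ (2*Real.exp 1) ^ ((z/2 + 2):ℝ) := by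
      rw [← Real.rpow_natCast (2*Real.exp 1) (2*K)]
      apply Real.rpow_le_rpow_of_exponent_le he1
      push_cast; linarith
    have hrpow : (2*Real.exp 1) ^ ((z/2 + 2):ℝ)
        = (2*Real.exp 1)^2 * Real.exp ((z/2) * (Real.log 2 + 1)) := by
      rw [Real.rpow_add (by positivity), Real.rpow_two]
      rw [Real.rpow_def_of_pos (by positivity)]
      rw [Real.log_mul (by norm_num) (Real.exp_ne_zero 1), Real.log_exp]
      ring
    have hlog : Real.exp ((z/2) * (Real.log 2 + 1)) ≤ Real.exp (17*z/20) := by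
      apply Real.exp_le_exp.2
      nlinarith [Real.log_two_lt_d9, hz.le]
    have hfK2 : z ^ (2*K) / ((2*K).factorial : ℝ)
        ≤ (2*Real.exp 1)^2 * Real.exp (17*z/20) := by
      calc z ^ (2*K) / ((2*K).factorial : ℝ) ≤ (2*Real.exp 1) ^ (2*K) := hfK
        _ ≤ (2*Real.exp 1) ^ ((z/2 + 2):ℝ) := hpow
        _ = (2*Real.exp 1)^2 * Real.exp ((z/2) * (Real.log 2 + 1)) := hrpow
        _ ≤ (2*Real.exp 1)^2 * Real.exp (17*z/20) :=
            mul_le_mul_of_nonneg_left hlog (by positivity)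
    have hKz : (K:ℝ) ≤ 1 + z := by linarith
    -- head * (1+z)^s
    have hs1 : (0:ℝ) < 1 + z := by linarith
    have hhead2 : (∑ k ∈ Finset.range K, g k) * (1+z) ^ s
        ≤ (2*Real.exp 1)^2 * A * Real.exp z := by
      have hP : (0:ℝ) < (1+z) ^ s := Real.rpow_pos_of_pos hs1 s
      have step1 : (∑ k ∈ Finset.range K, g k) * (1+z) ^ s
          ≤ ((1+z) * ((2*Real.exp 1)^2 * Real.exp (17*z/20))) * (1+z) ^ s := by
        apply mul_le_mul_of_nonneg_right _ hP.le
        calc (∑ k ∈ Finset.range K, g k) ≤ (K:ℝ) * (z ^ (2*K) / ((2*K).factorial : ℝ)) := hhead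
          _ ≤ (1+z) * ((2*Real.exp 1)^2 * Real.exp (17*z/20)) := by
              apply mul_le_mul hKz hfK2 (by positivity) (by linarith)
      have step2 : ((1+z) * ((2*Real.exp 1)^2 * Real.exp (17*z/20))) * (1+z) ^ s
          = (2*Real.exp 1)^2 * Real.exp (17*z/20) * ((1+z) ^ (s+1)) := by
        rw [Real.rpow_add_one hs1.ne']; ring
      have step3 : (1+z) ^ (s+1) ≤ A * Real.exp (3/20 * z) := hAle z hz.le
      calc (∑ k ∈ Finset.range K, g k) * (1+z) ^ s
          ≤ (2*Real.exp 1)^2 * Real.exp (17*z/20) * ((1+z) ^ (s+1)) := by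
            rw [← step2]; exact step1
        _ ≤ (2*Real.exp 1)^2 * Real.exp (17*z/20) * (A * Real.exp (3/20 * z)) :=
            mul_le_mul_of_nonneg_left step3 (by positivity)
        _ = (2*Real.exp 1)^2 * A * (Real.exp (17*z/20) * Real.exp (3/20 * z)) := by ring
        _ = (2*Real.exp 1)^2 * A * Real.exp z := by
            rw [← Real.exp_add]; ring_nf
    -- tail * (1+z)^s
    have htail2 : (∑' k : ℕ, g (k + K)) * (1+z) ^ s ≤ 4 ^ s * Real.exp z := by
      have hq : ((K:ℝ)+1) ^ (-s) * (1+z) ^ s ≤ 4 ^ s := by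
        rw [Real.rpow_neg (by positivity)]
        rw [inv_mul_eq_div, ← Real.div_rpow (by linarith) (by positivity)]
        apply Real.rpow_le_rpow (by positivity) _ hs.le
        rw [div_le_iff₀ (by positivity)]
        linarith
      have ht0 : (0:ℝ) ≤ ∑' k : ℕ, g (k + K) :=
        tsum_nonneg (fun k => hg0 (k+K))
      have hP : (0:ℝ) < (1+z) ^ s := Real.rpow_pos_of_pos hs1 s
      calc (∑' k : ℕ, g (k + K)) * (1+z) ^ s
          ≤ (((K:ℝ)+1) ^ (-s) * Real.exp z) * (1+z) ^ s :=
            mul_le_mul_of_nonneg_right htail hP.le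
        _ = (((K:ℝ)+1) ^ (-s) * (1+z) ^ s) * Real.exp z := by ring
        _ ≤ 4 ^ s * Real.exp z :=
            mul_le_mul_of_nonneg_right hq (Real.exp_pos z).le
    rw [hsplit, add_mul]
    have h5s : (0:ℝ) < 5 ^ s := Real.rpow_pos_of_pos (by norm_num) s
    nlinarith [hhead2, htail2, Real.exp_pos z]
lemma gamma_half_fact (k : ℕ) :
    Real.Gamma ((k : ℝ) + 1/2) * (4 ^ k * k.factorial) = Real.sqrt π * (2*k).factorial := by
  induction k with
  | zero =>
    norm_num
    exact Real.Gamma_one_half_eq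
  | succ k ih =>
    have hk : ((k:ℝ) + 1/2) ≠ 0 := by positivity
    have h1 : Real.Gamma (((k+1 : ℕ) : ℝ) + 1/2) = ((k:ℝ) + 1/2) * Real.Gamma ((k:ℝ) + 1/2) := by
      push_cast
      rw [show (k:ℝ) + 1 + 1/2 = ((k:ℝ) + 1/2) + 1 by ring, Real.Gamma_add_one hk]
    rw [h1]
    have h2 : ((2 * (k+1)).factorial : ℝ) = (2*k+2) * ((2*k+1) * (2*k).factorial) := by
      rw [show 2*(k+1) = (2*k+1)+1 by ring, Nat.factorial_succ, Nat.factorial_succ]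
      push_cast; ring
    have h3 : ((k+1).factorial : ℝ) = (k+1) * k.factorial := by
      rw [Nat.factorial_succ]; push_cast; ring
    rw [h2, h3]
    push_cast
    have h4 : (4:ℝ)^(k+1) = 4 * 4^k := by ring
    rw [h4]
    linear_combination (4*((k:ℝ)+1/2)*((k:ℝ)+1)) * ih

lemma gamma_add_frac_ge {x r : ℝ} (hx : 1/2 ≤ x) (hr0 : 0 ≤ r) (hr1 : r ≤ 1) :
    Real.Gamma x * x ^ r / 3 ≤ Real.Gamma (x + r) := by
  have hx0 : (0:ℝ) < x := by linarith
  have hxr : (0:ℝ) < x + r := by linarith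
  have hG : 0 < Real.Gamma x := Real.Gamma_pos_of_pos hx0
  have hGxr : 0 < Real.Gamma (x + r) := Real.Gamma_pos_of_pos hxr
  have hc := Real.convexOn_log_Gamma.2 (mem_Ioi.2 hxr)
    (mem_Ioi.2 (by linarith : (0:ℝ) < x + r + 1)) hr0 (by linarith : (0:ℝ) ≤ 1 - r)
    (by ring)
  simp only [smul_eq_mul, Function.comp_apply] at hc
  have harg : r * (x + r) + (1 - r) * (x + r + 1) = x + 1 := by ring
  rw [harg] at hc
  have e1 : Real.Gamma (x + r + 1) = (x + r) * Real.Gamma (x + r) :=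
    Real.Gamma_add_one hxr.ne'
  have e2 : Real.Gamma (x + 1) = x * Real.Gamma x := Real.Gamma_add_one hx0.ne'
  rw [e1, e2, Real.log_mul hxr.ne' hGxr.ne', Real.log_mul hx0.ne' hG.ne'] at hc
  -- hc : log x + log Γx ≤ r * log Γ(x+r) + (1-r) * (log (x+r) + log Γ(x+r))
  have hc2 : Real.log x + Real.log (Real.Gamma x) - (1 - r) * Real.log (x + r)
      ≤ Real.log (Real.Gamma (x + r)) := by nlinarith [hc]
  have key : x * Real.Gamma x / (x + r) ^ (1 - r) ≤ Real.Gamma (x + r) := by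
    have := Real.exp_le_exp.2 hc2
    rw [Real.exp_log hGxr] at this
    refine le_trans (le_of_eq ?_) this
    rw [Real.exp_sub, Real.exp_add, Real.exp_log hx0, Real.exp_log hG]
    rw [Real.rpow_def_of_pos hxr, mul_comm (Real.log (x+r))]
  refine le_trans ?_ key
  rw [div_le_div_iff₀ (by norm_num) (by positivity)]
  have h3x : x + r ≤ 3 * x := by linarith
  have hb1 : (x + r) ^ (1 - r) ≤ (3*x) ^ (1 - r) :=
    Real.rpow_le_rpow hxr.le h3x (by linarith)
  have hb2 : (3*x : ℝ) ^ (1 - r) = 3 ^ (1-r) * x ^ (1-r) :=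
    Real.mul_rpow (by norm_num) hx0.le
  have hb3 : (3:ℝ) ^ (1-r) ≤ 3 := by
    calc (3:ℝ) ^ (1-r) ≤ 3 ^ (1:ℝ) :=
          Real.rpow_le_rpow_of_exponent_le (by norm_num) (by linarith)
      _ = 3 := Real.rpow_one 3
  have hxx : x ^ r * x ^ (1-r) = x := by
    rw [← Real.rpow_add hx0]; norm_num
  have hxr1 : (0:ℝ) ≤ x ^ (1-r) := (Real.rpow_pos_of_pos hx0 _).le
  calc Real.Gamma x * x ^ r * (x + r) ^ (1-r)
      ≤ Real.Gamma x * x ^ r * (3 ^ (1-r) * x ^ (1-r)) := by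
        rw [← hb2]
        exact mul_le_mul_of_nonneg_left hb1 (by positivity)
    _ ≤ Real.Gamma x * x ^ r * (3 * x ^ (1-r)) := by
        have := mul_le_mul_of_nonneg_right hb3 hxr1
        exact mul_le_mul_of_nonneg_left this (by positivity)
    _ = x * Real.Gamma x * 3 := by rw [show Real.Gamma x * x^r * (3*x^(1-r)) = 3 * Real.Gamma x * (x^r * x^(1-r)) by ring, hxx]; ring

lemma gamma_add_ge {x : ℝ} (hx : 1/2 ≤ x) {s : ℝ} (hs : 0 ≤ s) :
    Real.Gamma x * x ^ s / 3 ≤ Real.Gamma (x + s) := by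
  have hx0 : (0:ℝ) < x := by linarith
  have aux : ∀ n : ℕ, ∀ r : ℝ, 0 ≤ r → r ≤ 1 →
      Real.Gamma x * x ^ (r + n) / 3 ≤ Real.Gamma (x + (r + n)) := by
    intro n
    induction n with
    | zero => intro r h0 h1; simpa using gamma_add_frac_ge hx h0 h1
    | succ n ih =>
      intro r h0 h1
      have hpos : (0:ℝ) < x + (r + n) := by positivity
      have e : x + (r + (n+1:ℕ)) = (x + (r + n)) + 1 := by push_cast; ring
      rw [e, Real.Gamma_add_one hpos.ne']
      have h2 : Real.Gamma x * x ^ (r + n) / 3 ≤ Real.Gamma (x + (r + n)) := ih r h0 h1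
      have h3 : x * (Real.Gamma x * x ^ (r + n) / 3) ≤ (x + (r+n)) * Real.Gamma (x + (r+n)) := by
        have hxle : x ≤ x + (r + n) := by linarith [Nat.cast_nonneg (α := ℝ) n]
        have hGp : 0 < Real.Gamma (x + (r+n)) := Real.Gamma_pos_of_pos hpos
        have hnn : 0 ≤ Real.Gamma x * x ^ (r + n) / 3 := by positivity
        calc x * (Real.Gamma x * x ^ (r + n) / 3) ≤ x * Real.Gamma (x + (r+n)) :=
              mul_le_mul_of_nonneg_left h2 hx0.le
          _ ≤ (x + (r+n)) * Real.Gamma (x + (r+n)) :=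
              mul_le_mul_of_nonneg_right hxle hGp.le
      refine le_trans (le_of_eq ?_) h3
      push_cast
      rw [show r + ((n:ℝ)+1) = (r + (n:ℝ)) + 1 by ring, Real.rpow_add_one hx0.ne']
      ring
  have hn : (⌊s⌋₊ : ℝ) ≤ s := Nat.floor_le hs
  have hn1 : s < ⌊s⌋₊ + 1 := Nat.lt_floor_add_one s
  have := aux ⌊s⌋₊ (s - ⌊s⌋₊) (by linarith) (by linarith)
  simpa using this

lemma ratio_core {a b : ℝ} (hb : 0 < b) (hab : b ≤ a) :
    a*b*((1+a)*(1+b)) ≤ 6*((1+2*(a*b))*(a*b + (a-b))) := by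
  have hd : 0 ≤ a - b := by linarith
  have h1 : 0 < 5*b^2 + 11*b^4 - 2*b^3 := by nlinarith [sq_nonneg (b - 1/11), sq_nonneg b, pow_pos hb 2, pow_pos hb 4]
  have h2 : 0 ≤ (a-b)*b*(11*a-2*b) := mul_nonneg (mul_nonneg hd hb.le) (by linarith)
  have h3 : 0 ≤ (a-b)*b := mul_nonneg hd hb.le
  have h4 : 0 ≤ (a-b)*(a+b)*b^2 := mul_nonneg (mul_nonneg hd (by linarith)) (sq_nonneg b)
  nlinarith [h1, h2, h3, h4, hd, hb.le, mul_nonneg (mul_nonneg hd hd) hb.le]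

lemma ratio_full {a b : ℝ} (ha : 0 < a) (hb : 0 < b) :
    a*b*((1+a)*(1+b)) ≤ 6*((1+2*(a*b))*(a*b + |a-b|)) := by
  rcases le_total b a with h | h
  · rw [abs_of_nonneg (by linarith)]; exact ratio_core hb h
  · rw [abs_of_nonpos (by linarith)]
    have h2 := ratio_core ha h
    nlinarith [h2]

lemma one_add_rpow_le {s u : ℝ} (hs : 0 ≤ s) (hu : 0 ≤ u) :
    (1+u) ^ s ≤ Real.exp (2*s^2) * Real.exp (u^2/8) := by
  have h1 : (1+u:ℝ) ≤ Real.exp u := by linarith [Real.add_one_le_exp u]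
  have h2 : (1+u) ^ s ≤ (Real.exp u) ^ s := Real.rpow_le_rpow (by linarith) h1 hs
  have h3 : (Real.exp u) ^ s = Real.exp (u*s) := by
    rw [← Real.exp_one_rpow u, ← Real.rpow_mul (Real.exp_pos 1).le, Real.exp_one_rpow]
  have h4 : u*s ≤ 2*s^2 + u^2/8 := by nlinarith [sq_nonneg (u - 4*s)]
  calc (1+u) ^ s ≤ Real.exp (u*s) := h3 ▸ h2
    _ ≤ Real.exp (2*s^2 + u^2/8) := Real.exp_le_exp.2 h4
    _ = Real.exp (2*s^2) * Real.exp (u^2/8) := Real.exp_add _ _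

lemma besselI_bound (ν : ℝ) (hν : -1/2 < ν) :
    ∃ C1 > 0, ∀ z : ℝ, 0 < z →
      besselI ν z ≤ C1 * z ^ ν * Real.exp z * (1+z) ^ (-(ν+1/2)) := by
  set s := ν + 1/2 with hsdef
  have hs : 0 < s := by rw [hsdef]; linarith
  obtain ⟨B, hB, hBle⟩ := T_bound hs
  have h2s : (0:ℝ) < 2 ^ s := Real.rpow_pos_of_pos (by norm_num) s
  have h2ν : (0:ℝ) < 2 ^ ν := Real.rpow_pos_of_pos (by norm_num) ν
  refine ⟨3 * 2 ^ s * B / 2 ^ ν, by positivity, fun z hz => ?_⟩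
  have hz2 : (0:ℝ) < z/2 := by linarith
  -- denominator lower bound
  have hden : ∀ k : ℕ, ((2*k).factorial : ℝ) * ((k:ℝ)+1) ^ s / (4^k * (3 * 2 ^ s))
      ≤ (k.factorial : ℝ) * Real.Gamma (ν + (k:ℝ) + 1) := by
    intro k
    have hx : (1:ℝ)/2 ≤ (k:ℝ) + 1/2 := by linarith [Nat.cast_nonneg (α := ℝ) k]
    have hxpos : (0:ℝ) < (k:ℝ) + 1/2 := by linarith
    have hgg := gamma_add_ge hx hs.le
    have harg : ((k:ℝ) + 1/2) + s = ν + (k:ℝ) + 1 := by rw [hsdef]; ring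
    rw [harg] at hgg
    have hGh : Real.Gamma ((k:ℝ) + 1/2) = Real.sqrt π * (2*k).factorial / (4^k * k.factorial) := by
      have h4 : ((4:ℝ)^k * (k.factorial:ℝ)) ≠ 0 := by positivity
      rw [eq_div_iff h4]
      exact gamma_half_fact k
    have hsqrtπ : (1:ℝ) ≤ Real.sqrt π := by
      rw [show (1:ℝ) = Real.sqrt 1 by simp]
      exact Real.sqrt_le_sqrt (by linarith [Real.pi_gt_three])
    have hpow : ((k:ℝ)+1) ^ s / 2 ^ s ≤ ((k:ℝ) + 1/2) ^ s := by
      rw [← Real.div_rpow (by positivity) (by norm_num)]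
      apply Real.rpow_le_rpow (by positivity) (by linarith) hs.le
    -- Γ(ν+k+1) ≥ Γ(k+1/2) * (k+1/2)^s / 3
    have hG2 : Real.sqrt π * (2*k).factorial / (4^k * k.factorial)
        * (((k:ℝ)+1) ^ s / 2 ^ s) / 3 ≤ Real.Gamma (ν + (k:ℝ) + 1) := by
      refine le_trans ?_ hgg
      rw [hGh]
      have hg1 : (0:ℝ) ≤ Real.sqrt π * (2*k).factorial / (4^k * k.factorial) := by positivity
      have := mul_le_mul_of_nonneg_left hpow hg1
      linarith
    have hfk : (0:ℝ) < (k.factorial : ℝ) := by positivity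
    have h1le : ((2*k).factorial : ℝ) ≤ Real.sqrt π * (2*k).factorial := by
      nlinarith [(Nat.cast_pos (α := ℝ)).2 (Nat.factorial_pos (2*k))]
    have hQ : (0:ℝ) < ((k:ℝ)+1) ^ s := Real.rpow_pos_of_pos (by positivity) s
    have h4k : (0:ℝ) < (4:ℝ)^k := by positivity
    have hF2k : (0:ℝ) < ((2*k).factorial : ℝ) := by positivity
    calc ((2*k).factorial : ℝ) * ((k:ℝ)+1) ^ s / (4^k * (3 * 2 ^ s))
        ≤ Real.sqrt π * (2*k).factorial * ((k:ℝ)+1) ^ s / (4^k * (3 * 2 ^ s)) := by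
          apply div_le_div_of_nonneg_right ?_ (by positivity)
          exact mul_le_mul_of_nonneg_right h1le hQ.le
      _ = (k.factorial : ℝ) * (Real.sqrt π * (2*k).factorial / (4^k * k.factorial)
            * (((k:ℝ)+1) ^ s / 2 ^ s) / 3) := by
          field_simp
      _ ≤ (k.factorial : ℝ) * Real.Gamma (ν + (k:ℝ) + 1) :=
          mul_le_mul_of_nonneg_left hG2 hfk.le
  -- termwise bound for the Bessel series
  set g : ℕ → ℝ := fun k => z ^ (2*k) / ((2*k).factorial * ((k:ℝ)+1) ^ s) with hgdef
  have hg0 : ∀ k, 0 ≤ g k := fun k => by positivity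
  have hfle : ∀ k : ℕ, g k ≤ z ^ (2*k) / ((2*k).factorial : ℝ) := by
    intro k
    apply div_le_div_of_nonneg_left (by positivity) (by positivity)
    have h1 : (1:ℝ) ≤ ((k:ℝ)+1) ^ s :=
      Real.one_le_rpow (by linarith [Nat.cast_nonneg (α := ℝ) k]) hs.le
    nlinarith [(Nat.cast_pos (α := ℝ)).2 (Nat.factorial_pos (2*k)), h1]
  have hcosh : Summable (fun k : ℕ => z ^ (2*k) / ((2*k).factorial : ℝ)) :=
    (Real.hasSum_cosh z).summable
  have hg : Summable g := Summable.of_nonneg_of_le hg0 hfle hcosh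
  have hterm : ∀ k : ℕ, (z / 2) ^ (ν + 2 * (k : ℝ)) / ((Nat.factorial k : ℝ) * Real.Gamma (ν + (k:ℝ) + 1))
      ≤ (z/2) ^ ν * (3 * 2 ^ s) * g k := by
    intro k
    have hnum : (z / 2) ^ (ν + 2 * (k : ℝ)) = (z/2) ^ ν * (z ^ (2*k) / 4^k) := by
      rw [Real.rpow_add hz2]
      congr 1
      rw [show (2 * (k:ℝ)) = ((2*k : ℕ) : ℝ) by push_cast; ring, Real.rpow_natCast]
      rw [div_pow, show ((2:ℝ))^(2*k) = 4^k by rw [pow_mul]; norm_num]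
    have hGpos : 0 < Real.Gamma (ν + (k:ℝ) + 1) := by
      apply Real.Gamma_pos_of_pos
      have : (0:ℝ) ≤ (k:ℝ) := Nat.cast_nonneg k
      linarith
    have hdpos : (0:ℝ) < ((2*k).factorial : ℝ) * ((k:ℝ)+1) ^ s / (4^k * (3 * 2 ^ s)) := by
      have : (0:ℝ) < ((k:ℝ)+1) ^ s := Real.rpow_pos_of_pos (by positivity) s
      positivity
    have h1 : (z / 2) ^ (ν + 2 * (k : ℝ)) / ((Nat.factorial k : ℝ) * Real.Gamma (ν + (k:ℝ) + 1))
        ≤ (z / 2) ^ (ν + 2 * (k : ℝ)) / (((2*k).factorial : ℝ) * ((k:ℝ)+1) ^ s / (4^k * (3 * 2 ^ s))) :=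
      div_le_div_of_nonneg_left (Real.rpow_nonneg (by linarith) _) hdpos (hden k)
    refine h1.trans (le_of_eq ?_)
    rw [hnum, hgdef]
    have hQ : (0:ℝ) < ((k:ℝ)+1) ^ s := Real.rpow_pos_of_pos (by positivity) s
    have hF2k : (0:ℝ) < ((2*k).factorial : ℝ) := by positivity
    have h4k : (0:ℝ) < (4:ℝ)^k := by positivity
    field_simp
  -- sum up
  have hsummand : Summable (fun k : ℕ => (z/2) ^ ν * (3 * 2 ^ s) * g k) := (hg.mul_left _)
  have hbl : besselI ν z ≤ (z/2) ^ ν * (3 * 2 ^ s) * ∑' k, g k := by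
    rw [besselI, ← tsum_mul_left]
    apply Summable.tsum_le_tsum hterm _ hsummand
    apply Summable.of_nonneg_of_le _ hterm hsummand
    intro k
    have hGpos : 0 < Real.Gamma (ν + (k:ℝ) + 1) := by
      apply Real.Gamma_pos_of_pos
      have : (0:ℝ) ≤ (k:ℝ) := Nat.cast_nonneg k
      linarith
    positivity
  have hTle : (∑' k, g k) ≤ B * Real.exp z * (1+z) ^ (-s) := by
    have hP : (0:ℝ) < (1+z) ^ s := Real.rpow_pos_of_pos (by linarith) s
    have := hBle z hz
    rw [Real.rpow_neg (by linarith), ← div_eq_mul_inv, le_div_iff₀ hP]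
    exact this
  have hmain : besselI ν z ≤ (z/2) ^ ν * (3 * 2 ^ s) * (B * Real.exp z * (1+z) ^ (-s)) := by
    refine hbl.trans ?_
    apply mul_le_mul_of_nonneg_left hTle
    positivity
  refine hmain.trans (le_of_eq ?_)
  rw [Real.div_rpow hz.le (by norm_num), hsdef]
  ring

/-- Gaussian upper bound with boundary decay factors for the Bessel heat kernel. -/
theorem bessel_heat_upper_bound (ν : ℝ) (hν : -1 / 2 < ν) :
    ∃ C > 0, ∃ c > 0, ∀ t > 0, ∀ x > 0, ∀ y > 0,
      heatK ν t x y ≤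
        C * t ^ (-(1 : ℝ) / 2) * Real.exp (-(x - y) ^ 2 / (c * t)) *
          (1 + Real.sqrt t / x) ^ (-(ν + 1 / 2)) * (1 + Real.sqrt t / y) ^ (-(ν + 1 / 2)) := by
  obtain ⟨C1, hC1, hI⟩ := besselI_bound ν (by linarith)
  set s : ℝ := ν + 1/2 with hsdef
  have hs : 0 < s := by rw [hsdef]; linarith
  have h6s : (0:ℝ) < 6 ^ s := Real.rpow_pos_of_pos (by norm_num) s
  refine ⟨C1 * 6 ^ s * Real.exp (2*s^2) / Real.sqrt 2,
    by positivity, 8, by norm_num, fun t ht x hx y hy => ?_⟩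
  set z : ℝ := x*y/(2*t) with hzdef
  have hz : 0 < z := by positivity
  have hst : 0 < Real.sqrt t := Real.sqrt_pos.2 ht
  set u : ℝ := |x - y| / Real.sqrt t with hudef
  have hu : 0 ≤ u := by positivity
  set P : ℝ := 1 + Real.sqrt t / x with hPdef
  set Q : ℝ := 1 + Real.sqrt t / y with hQdef
  set W : ℝ := 1 + 2*t/(x*y) with hWdef
  have hP : 0 < P := by positivity
  have hQ : 0 < Q := by positivity
  have hW : 0 < W := by positivity
  have h1z : 0 < 1 + z := by linarith
  -- step 1: apply Bessel bound
  have hpref : 0 < Real.sqrt (x*y) / (2*t) * Real.exp (-(x^2+y^2)/(4*t)) := by positivity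
  have step1 : heatK ν t x y ≤ Real.sqrt (x*y) / (2*t) * Real.exp (-(x^2+y^2)/(4*t)) *
      (C1 * z ^ ν * Real.exp z * (1+z) ^ (-s)) := by
    rw [heatK]
    exact mul_le_mul_of_nonneg_left (hI z hz) hpref.le
  -- identities
  have hsq2t : Real.sqrt (x*y) / (2*t) = Real.sqrt z / (Real.sqrt 2 * Real.sqrt t) := by
    have h2t0 : (2*t : ℝ) ≠ 0 := by positivity
    have hxy : x*y = z * (2*t) := by rw [hzdef, div_mul_cancel₀ _ h2t0]
    have h1 : Real.sqrt (x*y) = Real.sqrt z * (Real.sqrt 2 * Real.sqrt t) := by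
      rw [hxy, Real.sqrt_mul hz.le, Real.sqrt_mul (by norm_num : (0:ℝ) ≤ 2)]
    have h2 : (2:ℝ)*t = (Real.sqrt 2*Real.sqrt t)*(Real.sqrt 2*Real.sqrt t) := by
      rw [mul_mul_mul_comm, Real.mul_self_sqrt (by norm_num : (0:ℝ) ≤ 2), Real.mul_self_sqrt ht.le]
    rw [h1, h2]
    have h3 : Real.sqrt 2 * Real.sqrt t ≠ 0 := by positivity
    field_simp
  have hzs : Real.sqrt z * z ^ ν = z ^ s := by
    rw [Real.sqrt_eq_rpow, ← Real.rpow_add hz, hsdef]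
    ring_nf
  have hexp : Real.exp (-(x^2+y^2)/(4*t)) * Real.exp z = Real.exp (-(x-y)^2/(4*t)) := by
    rw [← Real.exp_add]
    congr 1
    rw [hzdef]; field_simp; ring
  have hzw : z ^ s * (1+z) ^ (-s) = W ^ (-s) := by
    have hinv : z/(1+z) = W⁻¹ := by
      rw [hzdef, hWdef]
      rw [inv_eq_one_div]
      field_simp
      ring
    rw [Real.rpow_neg h1z.le, ← div_eq_mul_inv, ← Real.div_rpow hz.le h1z.le, hinv,
      Real.inv_rpow hW.le, ← Real.rpow_neg hW.le]
  -- step 2: rewrite middle expression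
  have step2 : Real.sqrt (x*y) / (2*t) * Real.exp (-(x^2+y^2)/(4*t)) *
      (C1 * z ^ ν * Real.exp z * (1+z) ^ (-s))
      = C1 / (Real.sqrt 2 * Real.sqrt t) * (W ^ (-s)) * Real.exp (-(x-y)^2/(4*t)) := by
    rw [hsq2t]
    rw [show Real.sqrt z / (Real.sqrt 2 * Real.sqrt t) * Real.exp (-(x^2+y^2)/(4*t)) *
      (C1 * z ^ ν * Real.exp z * (1+z) ^ (-s))
      = C1 / (Real.sqrt 2 * Real.sqrt t) * ((Real.sqrt z * z ^ ν) * ((1+z) ^ (-s))) *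
        (Real.exp (-(x^2+y^2)/(4*t)) * Real.exp z) by ring, hzs, hzw, hexp]
  -- step 3 : comparison of W with P, Q
  have step3 : W ^ (-s) ≤ 6 ^ s * (1+u) ^ s * (P ^ (-s) * Q ^ (-s)) := by
    have ha : 0 < Real.sqrt t / x := by positivity
    have hb : 0 < Real.sqrt t / y := by positivity
    have hab : (Real.sqrt t / x) * (Real.sqrt t / y) = t/(x*y) := by
      rw [div_mul_div_comm, Real.mul_self_sqrt ht.le]
    have habs : |Real.sqrt t / x - Real.sqrt t / y| = (t/(x*y)) * u := by
      have e1 : Real.sqrt t / x - Real.sqrt t / y = Real.sqrt t * (y - x) / (x*y) := by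
        field_simp
      rw [e1, abs_div, abs_mul, abs_of_pos hst, abs_of_pos (mul_pos hx hy), abs_sub_comm y x,
        hudef]
      rw [div_mul_div_comm, div_eq_div_iff (by positivity) (by positivity)]
      linear_combination (|x - y| * (x*y)) * Real.mul_self_sqrt ht.le
    have hcore := ratio_full ha hb
    rw [hab, habs] at hcore
    have htxy : 0 < t/(x*y) := by positivity
    have hPQ : P * Q ≤ 6 * (W * (1+u)) := by
      rw [hPdef, hQdef, hWdef]
      have expand : 6*((1+2*(t/(x*y)))*(t/(x*y) + t/(x*y)*u))
          = (t/(x*y)) * (6 * ((1+2*t/(x*y)) * (1+u))) := by ring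
      rw [expand] at hcore
      have h5 := (mul_le_mul_iff_right₀ htxy).1 hcore
      linarith [h5]
    have hkey : P ^ s * Q ^ s ≤ 6 ^ s * W ^ s * (1+u) ^ s := by
      calc P ^ s * Q ^ s = (P*Q) ^ s := (Real.mul_rpow hP.le hQ.le).symm
        _ ≤ (6*(W*(1+u))) ^ s := Real.rpow_le_rpow (by positivity) hPQ hs.le
        _ = 6 ^ s * (W ^ s * (1+u) ^ s) := by
            rw [Real.mul_rpow (by norm_num : (0:ℝ) ≤ 6) (by positivity),
              Real.mul_rpow hW.le (by positivity)]
        _ = 6 ^ s * W ^ s * (1+u) ^ s := by ring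
    have hPs : 0 < P ^ s := Real.rpow_pos_of_pos hP s
    have hQs : 0 < Q ^ s := Real.rpow_pos_of_pos hQ s
    have hWs : 0 < W ^ s := Real.rpow_pos_of_pos hW s
    have hPQs : 0 < P ^ s * Q ^ s := mul_pos hPs hQs
    have hfin : (W^s)⁻¹ * (P^s * Q^s) ≤ 6^s * (1+u)^s := by
      have h := mul_le_mul_of_nonneg_left hkey (inv_nonneg.2 hWs.le)
      rw [show (W^s)⁻¹ * (6^s*W^s*(1+u)^s) = (W^s)⁻¹*(W^s)*(6^s*(1+u)^s) by ring,
        inv_mul_cancel₀ hWs.ne', one_mul] at h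
      exact h
    rw [Real.rpow_neg hW.le, Real.rpow_neg hP.le, Real.rpow_neg hQ.le]
    calc (W^s)⁻¹ ≤ (6^s*(1+u)^s)/(P^s*Q^s) := by
          rw [le_div_iff₀ hPQs]; exact hfin
      _ = 6^s*(1+u)^s*((P^s)⁻¹*(Q^s)⁻¹) := by rw [div_eq_mul_inv, mul_inv]
  -- step 5: Gaussian absorption
  have hgauss : (1+u)^s * Real.exp (-(x-y)^2/(4*t)) ≤
      Real.exp (2*s^2) * Real.exp (-(x-y)^2/(8*t)) := by
    have h1 := one_add_rpow_le hs.le hu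
    have hu2 : u^2 = (x-y)^2/t := by
      rw [hudef, div_pow, sq_abs, Real.sq_sqrt ht.le]
    have h2 : Real.exp (u^2/8) * Real.exp (-(x-y)^2/(4*t)) = Real.exp (-(x-y)^2/(8*t)) := by
      rw [← Real.exp_add, hu2]; congr 1; field_simp; ring
    calc (1+u)^s * Real.exp (-(x-y)^2/(4*t))
        ≤ (Real.exp (2*s^2) * Real.exp (u^2/8)) * Real.exp (-(x-y)^2/(4*t)) :=
          mul_le_mul_of_nonneg_right h1 (Real.exp_pos _).le
      _ = Real.exp (2*s^2) * (Real.exp (u^2/8) * Real.exp (-(x-y)^2/(4*t))) := by ring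
      _ = Real.exp (2*s^2) * Real.exp (-(x-y)^2/(8*t)) := by rw [h2]
  have hrt : t ^ (-(1:ℝ)/2) = (Real.sqrt t)⁻¹ := by
    rw [show (-(1:ℝ)/2) = -(1/2) by norm_num, Real.rpow_neg ht.le, Real.sqrt_eq_rpow]
  have hPns : 0 < P ^ (-s) := Real.rpow_pos_of_pos hP _
  have hQns : 0 < Q ^ (-s) := Real.rpow_pos_of_pos hQ _
  calc heatK ν t x y
      ≤ Real.sqrt (x*y) / (2*t) * Real.exp (-(x^2+y^2)/(4*t)) *
        (C1 * z ^ ν * Real.exp z * (1+z) ^ (-s)) := step1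
    _ = C1 / (Real.sqrt 2 * Real.sqrt t) * (W ^ (-s)) * Real.exp (-(x-y)^2/(4*t)) := step2
    _ ≤ C1 / (Real.sqrt 2 * Real.sqrt t) * (6 ^ s * (1+u) ^ s * (P ^ (-s) * Q ^ (-s))) *
        Real.exp (-(x-y)^2/(4*t)) := by
        apply mul_le_mul_of_nonneg_right _ (Real.exp_pos _).le
        exact mul_le_mul_of_nonneg_left step3 (by positivity)
    _ = (C1 * 6 ^ s / (Real.sqrt 2 * Real.sqrt t)) * ((1+u) ^ s * Real.exp (-(x-y)^2/(4*t))) *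
        (P ^ (-s) * Q ^ (-s)) := by ring
    _ ≤ (C1 * 6 ^ s / (Real.sqrt 2 * Real.sqrt t)) *
        (Real.exp (2*s^2) * Real.exp (-(x-y)^2/(8*t))) * (P ^ (-s) * Q ^ (-s)) := by
        apply mul_le_mul_of_nonneg_right _ (by positivity)
        exact mul_le_mul_of_nonneg_left hgauss (by positivity)
    _ = C1 * 6 ^ s * Real.exp (2*s^2) / Real.sqrt 2 * t ^ (-(1:ℝ)/2) *
        Real.exp (-(x-y)^2/(8*t)) * P ^ (-s) * Q ^ (-s) := by
        rw [hrt]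
        field_simp
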